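/- Soundness and strong completeness of IMCalc with respect to full constructive neighbourhood models: for every set Γ of L-formulas and every L-formula φ, Γ ⊢_{IMCalc} φ if and only if for every full constructive neighbourhood model M and every world w of M, if M,w ⊩ ψ for all ψ ∈ Γ then M,w ⊩ φ. -/

import Mathlib

/-
Common formalisation of the syntax and semantics of the intuitionistic
monotone modal logic IM, its generalised Hilbert calculi, intuitionistic
neighbourhood models, IFOM-structures, and related constructions.
-/

namespace IMPaper

/-- Formulas of the monotone modal language L. -/
inductive Formula : Type
  | prop : ℕ → Formula
  | bot  : Formula
  | and  : Formula → Formula → Formula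
  | or   : Formula → Formula → Formula
  | imp  : Formula → Formula → Formula
  | box  : Formula → Formula
  | dia  : Formula → Formula
deriving DecidableEq

/-- Negation: ¬φ abbreviates φ → ⊥. -/
def Formula.neg (φ : Formula) : Formula := φ.imp .bot

/-- Top: ⊤ abbreviates ⊥ → ⊥. -/
def Formula.top : Formula := Formula.bot.imp .bot

/-- Substitution of formulas for proposition letters. -/
def Formula.subst (σ : ℕ → Formula) : Formula → Formula
  | .prop i   => σ i
  | .bot      => .bot
  | .and φ ψ  => .and (φ.subst σ) (ψ.subst σ)
  | .or φ ψ   => .or (φ.subst σ) (ψ.subst σ)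
  | .imp φ ψ  => .imp (φ.subst σ) (ψ.subst σ)
  | .box φ    => .box (φ.subst σ)
  | .dia φ    => .dia (φ.subst σ)

private def pp0 : Formula := .prop 0
private def pp1 : Formula := .prop 1
private def pp2 : Formula := .prop 2

/-- A standard axiomatisation of intuitionistic propositional logic. -/
def IpcAx : Set Formula :=
  { Formula.imp pp0 (.imp pp1 pp0),
    Formula.imp (.imp pp0 (.imp pp1 pp2)) (.imp (.imp pp0 pp1) (.imp pp0 pp2)),
    Formula.imp (.and pp0 pp1) pp0,
    Formula.imp (.and pp0 pp1) pp1,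
    Formula.imp pp0 (.imp pp1 (.and pp0 pp1)),
    Formula.imp pp0 (.or pp0 pp1),
    Formula.imp pp1 (.or pp0 pp1),
    Formula.imp (.imp pp0 pp2) (.imp (.imp pp1 pp2) (.imp (.or pp0 pp1) pp2)),
    Formula.imp .bot pp0 }

/-- All substitution instances of a set of formulas. -/
def Instances (Ax : Set Formula) : Set Formula :=
  {φ | ∃ ψ ∈ Ax, ∃ σ, φ = ψ.subst σ}

/-- 𝒜x: all substitution instances of Ax together with all substitution
instances of the axioms of intuitionistic propositional logic. -/
def ScrAx (Ax : Set Formula) : Set Formula := Instances Ax ∪ Instances IpcAx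

/-- The generalised Hilbert calculus GHC(Ax). -/
inductive GHC (Ax : Set Formula) : Set Formula → Formula → Prop
  | el {Γ : Set Formula} {φ : Formula} : φ ∈ Γ → GHC Ax Γ φ
  | ax {Γ : Set Formula} {φ : Formula} : φ ∈ ScrAx Ax → GHC Ax Γ φ
  | mp {Γ : Set Formula} {φ ψ : Formula} :
      GHC Ax Γ φ → GHC Ax Γ (φ.imp ψ) → GHC Ax Γ ψ
  | monBox {Γ : Set Formula} {φ ψ : Formula} :
      GHC Ax ∅ (φ.imp ψ) → GHC Ax Γ ((Formula.box φ).imp (Formula.box ψ))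
  | monDia {Γ : Set Formula} {φ ψ : Formula} :
      GHC Ax ∅ (φ.imp ψ) → GHC Ax Γ ((Formula.dia φ).imp (Formula.dia ψ))

/-- The axioms (neg_a) and (I_◇) of the calculus IMCalc. -/
def IMAx : Set Formula :=
  { Formula.imp ((Formula.box pp0).and (Formula.dia pp0.neg)) .bot,
    Formula.imp ((Formula.box Formula.top).imp (Formula.dia pp0)) (Formula.dia pp0) }

/-- Derivability in the calculus IMCalc = GHC({(□p ∧ ◇¬p) → ⊥, (□⊤ → ◇p) → ◇p}). -/
def IMC : Set Formula → Formula → Prop := GHC IMAx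

/-- An intuitionistic neighbourhood: a partial function W ⇀ 𝒫(W), encoded as a
domain together with a (total) value function whose values matter on the domain. -/
structure Nbhd (W : Type) where
  dom : Set W
  val : W → Set W

/-- The data of an intuitionistic neighbourhood model. -/
structure INStruct (W : Type) where
  le : W → W → Prop
  N : Set (Nbhd W)
  V : ℕ → Set W

variable {W W' : Type}

/-- A set is upward closed w.r.t. the order of the structure. -/
def INStruct.Up (M : INStruct W) (s : Set W) : Prop :=
  ∀ ⦃w v : W⦄, M.le w v → w ∈ s → v ∈ s

/-- `M` is an intuitionistic neighbourhood model: the order is a partial order,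
the domain of every neighbourhood is upward closed, and the valuation assigns
upward closed sets to proposition letters. -/
def INStruct.IsModel (M : INStruct W) : Prop :=
  IsPartialOrder W M.le ∧ (∀ a ∈ M.N, M.Up a.dom) ∧ ∀ i, M.Up (M.V i)

/-- Truth of a formula at a world of an intuitionistic neighbourhood model. -/
def INStruct.sat (M : INStruct W) : Formula → W → Prop
  | .prop i, w  => w ∈ M.V i
  | .bot, _     => False
  | .and φ ψ, w => M.sat φ w ∧ M.sat ψ w
  | .or φ ψ, w  => M.sat φ w ∨ M.sat ψ w
  | .imp φ ψ, w => ∀ v, M.le w v → M.sat φ v → M.sat ψ v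
  | .box φ, w   => ∃ a ∈ M.N, w ∈ a.dom ∧
      ∀ w', M.le w w' → ∀ v ∈ a.val w', M.sat φ v
  | .dia φ, w   => ∀ w', M.le w w' → ∀ a ∈ M.N, w' ∈ a.dom →
      ∃ v ∈ a.val w', M.sat φ v

/-- Semantic consequence over the class of all intuitionistic neighbourhood models. -/
def INConseq (Γ : Set Formula) (φ : Formula) : Prop :=
  ∀ (W : Type) (M : INStruct W), M.IsModel →
    ∀ w : W, (∀ ψ ∈ Γ, M.sat ψ w) → M.sat φ w

/-- A coherent intuitionistic neighbourhood: conditions (N1) and (N2). -/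
def INStruct.CoherentNbhd (M : INStruct W) (a : Nbhd W) : Prop :=
  (∀ ⦃w w' : W⦄, M.le w w' → w ∈ a.dom → ∀ v ∈ a.val w, ∃ v' ∈ a.val w', M.le v v') ∧
  (∀ ⦃w : W⦄, w ∈ a.dom → ∀ v ∈ a.val w, ∀ v', M.le v v' →
      ∃ w', M.le w w' ∧ v' ∈ a.val w')

/-- A model is coherent if all its intuitionistic neighbourhoods are coherent. -/
def INStruct.Coherent (M : INStruct W) : Prop := ∀ a ∈ M.N, M.CoherentNbhd a

/-- Semantic consequence over the class of coherent intuitionistic neighbourhood models. -/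
def CohConseq (Γ : Set Formula) (φ : Formula) : Prop :=
  ∀ (W : Type) (M : INStruct W), M.IsModel → M.Coherent →
    ∀ w : W, (∀ ψ ∈ Γ, M.sat ψ w) → M.sat φ w

/-- The relation R: w R v iff v ∈ a(w) for some neighbourhood a of w. -/
def INStruct.R (M : INStruct W) (w v : W) : Prop :=
  ∃ a ∈ M.N, w ∈ a.dom ∧ v ∈ a.val w

/-- R~-Cartesian: w ≤~ v R~ w implies w = v (with ~ the equivalence closures). -/
def INStruct.RCartesian (M : INStruct W) : Prop :=
  ∀ w v, Relation.EqvGen M.le w v → Relation.EqvGen M.R v w → w = v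

/-- N-Cartesian: w R~ v and w, v ∈ dom(a) imply a(w) = a(v). -/
def INStruct.NCartesian (M : INStruct W) : Prop :=
  ∀ a ∈ M.N, ∀ w v, Relation.EqvGen M.R w v → w ∈ a.dom → v ∈ a.dom →
    a.val w = a.val v

/-- Cartesian: both R~-Cartesian and N-Cartesian. -/
def INStruct.Cartesian (M : INStruct W) : Prop := M.RCartesian ∧ M.NCartesian

/-- Isomorphism of intuitionistic neighbourhood structures. -/
def Isomorphic (M : INStruct W) (M' : INStruct W') : Prop :=
  ∃ (α : W → W') (ν : Nbhd W → Nbhd W'),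
    Function.Bijective α ∧ Set.BijOn ν M.N M'.N ∧
    (∀ w v, M.le w v ↔ M'.le (α w) (α v)) ∧
    (∀ a ∈ M.N, ∀ w, w ∈ a.dom ↔ α w ∈ (ν a).dom) ∧
    (∀ a ∈ M.N, ∀ u ∈ a.dom, ∀ w, w ∈ a.val u ↔ α w ∈ (ν a).val (α u)) ∧
    (∀ i w, w ∈ M.V i ↔ α w ∈ M'.V i)

end IMPaper
namespace IMPaper

variable {W : Type}

/-- The data of a constructive neighbourhood model. -/
structure CNStruct (W : Type) where
  le : W → W → Prop
  nf : W → Set (Set W)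
  V : ℕ → Set W

/-- `M` is a constructive neighbourhood model: the order is a preorder and the
valuation assigns upward closed sets. -/
def CNStruct.IsModel (M : CNStruct W) : Prop :=
  IsPreorder W M.le ∧ ∀ i, ∀ ⦃w v : W⦄, M.le w v → w ∈ M.V i → v ∈ M.V i

/-- Fullness: if γ(w) ≠ ∅ and w ⪯ w' then γ(w') ≠ ∅. -/
def CNStruct.Full (M : CNStruct W) : Prop :=
  ∀ ⦃w w' : W⦄, M.le w w' → M.nf w ≠ ∅ → M.nf w' ≠ ∅

/-- Truth at a world of a constructive neighbourhood model. -/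
def CNStruct.sat (M : CNStruct W) : Formula → W → Prop
  | .prop i, w  => w ∈ M.V i
  | .bot, _     => False
  | .and φ ψ, w => M.sat φ w ∧ M.sat ψ w
  | .or φ ψ, w  => M.sat φ w ∨ M.sat ψ w
  | .imp φ ψ, w => ∀ v, M.le w v → M.sat φ v → M.sat ψ v
  | .box φ, w   => ∀ w', M.le w w' → ∃ a ∈ M.nf w', ∀ v ∈ a, M.sat φ v
  | .dia φ, w   => ∀ w', M.le w w' → ∀ a ∈ M.nf w', ∃ v ∈ a, M.sat φ v

/-- 𝒞(w): all sets of the form {a(f(a)) : a ∈ N_w} for a choice function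
f : N_w → ↑w. -/
def INStruct.CCset (M : INStruct W) (w : W) : Set (Set (Set W)) :=
  {S | ∃ f : Nbhd W → W, (∀ a ∈ M.N, w ∈ a.dom → M.le w (f a)) ∧
    S = {s | ∃ a ∈ M.N, w ∈ a.dom ∧ s = a.val (f a)}}

/-- The carrier Ŵ = {(w, Σ) : Σ ∈ 𝒞(w)}. -/
def INStruct.HatW (M : INStruct W) : Type := {p : W × Set (Set W) // p.2 ∈ M.CCset p.1}

/-- The constructive neighbourhood model M̂ associated with M, with
(w,Σ) ⪯ (w',Σ') iff w ≤ w', γ(w,Σ) = Σ (lifted to subsets of Ŵ), and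
V̂(p_i) = {(w,Σ) : w ∈ V(p_i)}. -/
def INStruct.hat (M : INStruct W) : CNStruct M.HatW where
  le := fun p q => M.le p.1.1 q.1.1
  nf := fun p => (fun s => {q : M.HatW | q.1.1 ∈ s}) '' p.1.2
  V := fun i => {p | p.1.1 ∈ M.V i}

end IMPaper
namespace IMPaper

/-! ### Auxiliary development for Statement 17 -/

section Calculus

lemma imc_mono {Γ : Set Formula} {φ : Formula} (h : IMC Γ φ) :
    ∀ {Γ' : Set Formula}, Γ ⊆ Γ' → IMC Γ' φ := by
  induction h with
  | el h => exact fun hs => GHC.el (hs h)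
  | ax h => exact fun _ => GHC.ax h
  | mp _ _ ih1 ih2 => exact fun hs => GHC.mp (ih1 hs) (ih2 hs)
  | monBox h => exact fun _ => GHC.monBox h
  | monDia h => exact fun _ => GHC.monDia h

lemma imc_finite {Γ : Set Formula} {φ : Formula} (h : IMC Γ φ) :
    ∃ Γ₀ : Set Formula, Γ₀ ⊆ Γ ∧ Γ₀.Finite ∧ IMC Γ₀ φ := by
  induction h with
  | @el Γ ψ h =>
      exact ⟨{ψ}, Set.singleton_subset_iff.2 h, Set.finite_singleton _, GHC.el rfl⟩
  | ax h => exact ⟨∅, Set.empty_subset _, Set.finite_empty, GHC.ax h⟩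
  | mp _ _ ih1 ih2 =>
      obtain ⟨G1, hs1, hf1, hd1⟩ := ih1
      obtain ⟨G2, hs2, hf2, hd2⟩ := ih2
      exact ⟨G1 ∪ G2, Set.union_subset hs1 hs2, hf1.union hf2,
        GHC.mp (imc_mono hd1 Set.subset_union_left) (imc_mono hd2 Set.subset_union_right)⟩
  | monBox h => exact ⟨∅, Set.empty_subset _, Set.finite_empty, GHC.monBox h⟩
  | monDia h => exact ⟨∅, Set.empty_subset _, Set.finite_empty, GHC.monDia h⟩

private def σ2 (a b : Formula) : ℕ → Formula := fun n => if n = 0 then a else b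
private def σ3 (a b c : Formula) : ℕ → Formula :=
  fun n => if n = 0 then a else if n = 1 then b else c

lemma scrax_ipc {ψ : Formula} (h : ψ ∈ IpcAx) (σ : ℕ → Formula) :
    Formula.subst σ ψ ∈ ScrAx IMAx := Set.mem_union_right _ ⟨ψ, h, σ, rfl⟩

lemma scrax_im {ψ : Formula} (h : ψ ∈ IMAx) (σ : ℕ → Formula) :
    Formula.subst σ ψ ∈ ScrAx IMAx := Set.mem_union_left _ ⟨ψ, h, σ, rfl⟩

lemma imc1 (Γ : Set Formula) (a b : Formula) : IMC Γ (a.imp (b.imp a)) := by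
  have hm : Formula.imp pp0 (.imp pp1 pp0) ∈ IpcAx := by simp [IpcAx]
  have h := GHC.ax (Γ := Γ) (scrax_ipc hm (σ2 a b))
  show GHC IMAx _ _
  simpa [Formula.subst, pp0, pp1, σ2] using h

lemma imc2 (Γ : Set Formula) (a b c : Formula) :
    IMC Γ ((a.imp (b.imp c)).imp ((a.imp b).imp (a.imp c))) := by
  have hm : Formula.imp (.imp pp0 (.imp pp1 pp2)) (.imp (.imp pp0 pp1) (.imp pp0 pp2)) ∈ IpcAx := by
    simp [IpcAx]
  have h := GHC.ax (Γ := Γ) (scrax_ipc hm (σ3 a b c))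
  show GHC IMAx _ _
  simpa [Formula.subst, pp0, pp1, pp2, σ3] using h

lemma imc3 (Γ : Set Formula) (a b : Formula) : IMC Γ ((a.and b).imp a) := by
  have hm : Formula.imp (.and pp0 pp1) pp0 ∈ IpcAx := by simp [IpcAx]
  have h := GHC.ax (Γ := Γ) (scrax_ipc hm (σ2 a b))
  show GHC IMAx _ _
  simpa [Formula.subst, pp0, pp1, σ2] using h

lemma imc4 (Γ : Set Formula) (a b : Formula) : IMC Γ ((a.and b).imp b) := by
  have hm : Formula.imp (.and pp0 pp1) pp1 ∈ IpcAx := by simp [IpcAx]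
  have h := GHC.ax (Γ := Γ) (scrax_ipc hm (σ2 a b))
  show GHC IMAx _ _
  simpa [Formula.subst, pp0, pp1, σ2] using h

lemma imc5 (Γ : Set Formula) (a b : Formula) : IMC Γ (a.imp (b.imp (a.and b))) := by
  have hm : Formula.imp pp0 (.imp pp1 (.and pp0 pp1)) ∈ IpcAx := by simp [IpcAx]
  have h := GHC.ax (Γ := Γ) (scrax_ipc hm (σ2 a b))
  show GHC IMAx _ _
  simpa [Formula.subst, pp0, pp1, σ2] using h

lemma imc6 (Γ : Set Formula) (a b : Formula) : IMC Γ (a.imp (a.or b)) := by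
  have hm : Formula.imp pp0 (.or pp0 pp1) ∈ IpcAx := by simp [IpcAx]
  have h := GHC.ax (Γ := Γ) (scrax_ipc hm (σ2 a b))
  show GHC IMAx _ _
  simpa [Formula.subst, pp0, pp1, σ2] using h

lemma imc7 (Γ : Set Formula) (a b : Formula) : IMC Γ (b.imp (a.or b)) := by
  have hm : Formula.imp pp1 (.or pp0 pp1) ∈ IpcAx := by simp [IpcAx]
  have h := GHC.ax (Γ := Γ) (scrax_ipc hm (σ2 a b))
  show GHC IMAx _ _
  simpa [Formula.subst, pp0, pp1, σ2] using h

lemma imc8 (Γ : Set Formula) (a b c : Formula) :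
    IMC Γ ((a.imp c).imp ((b.imp c).imp ((a.or b).imp c))) := by
  have hm : Formula.imp (.imp pp0 pp2) (.imp (.imp pp1 pp2) (.imp (.or pp0 pp1) pp2)) ∈ IpcAx := by
    simp [IpcAx]
  have h := GHC.ax (Γ := Γ) (scrax_ipc hm (σ3 a b c))
  show GHC IMAx _ _
  simpa [Formula.subst, pp0, pp1, pp2, σ3] using h

lemma imc9 (Γ : Set Formula) (a : Formula) : IMC Γ (Formula.bot.imp a) := by
  have hm : Formula.imp .bot pp0 ∈ IpcAx := by simp [IpcAx]
  have h := GHC.ax (Γ := Γ) (scrax_ipc hm (σ2 a a))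
  show GHC IMAx _ _
  simpa [Formula.subst, pp0, σ2] using h

lemma imcNegA (Γ : Set Formula) (a : Formula) :
    IMC Γ (((Formula.box a).and (Formula.dia a.neg)).imp .bot) := by
  have hm : Formula.imp ((Formula.box pp0).and (Formula.dia pp0.neg)) .bot ∈ IMAx := by
    simp [IMAx]
  have h := GHC.ax (Γ := Γ) (scrax_im hm (σ2 a a))
  show GHC IMAx _ _
  simpa [Formula.subst, Formula.neg, pp0, σ2] using h

lemma imcIDia (Γ : Set Formula) (a : Formula) :
    IMC Γ (((Formula.box Formula.top).imp (Formula.dia a)).imp (Formula.dia a)) := by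
  have hm : Formula.imp ((Formula.box Formula.top).imp (Formula.dia pp0)) (Formula.dia pp0) ∈ IMAx := by
    simp [IMAx]
  have h := GHC.ax (Γ := Γ) (scrax_im hm (σ2 a a))
  show GHC IMAx _ _
  simpa [Formula.subst, Formula.top, pp0, σ2] using h

lemma imc_id (Γ : Set Formula) (a : Formula) : IMC Γ (a.imp a) :=
  GHC.mp (imc1 Γ a a) (GHC.mp (imc1 Γ a (a.imp a)) (imc2 Γ a (a.imp a) a))

lemma imc_top (Γ : Set Formula) : IMC Γ Formula.top := imc_id Γ .bot

lemma imc_ded_aux {Δ : Set Formula} {b : Formula} (h : GHC IMAx Δ b) :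
    ∀ {Γ : Set Formula} {a : Formula}, Δ = insert a Γ → IMC Γ (a.imp b) := by
  induction h with
  | @el Δ ψ hm =>
      intro Γ a hE
      subst hE
      rcases Set.mem_insert_iff.1 hm with rfl | hm
      · exact imc_id _ _
      · exact GHC.mp (GHC.el hm) (imc1 _ _ _)
  | ax hm => exact fun _ => GHC.mp (GHC.ax hm) (imc1 _ _ _)
  | @mp Δ φ ψ h1 h2 ih1 ih2 =>
      intro Γ a hE
      exact GHC.mp (ih1 hE) (GHC.mp (ih2 hE) (imc2 _ _ _ _))
  | monBox h => exact fun _ => GHC.mp (GHC.monBox h) (imc1 _ _ _)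
  | monDia h => exact fun _ => GHC.mp (GHC.monDia h) (imc1 _ _ _)

lemma imc_ded {Γ : Set Formula} {a b : Formula} (h : IMC (insert a Γ) b) :
    IMC Γ (a.imp b) := imc_ded_aux h rfl

lemma imc_cut {Γ : Set Formula} {a b : Formula} (h1 : IMC Γ a)
    (h2 : IMC (insert a Γ) b) : IMC Γ b := GHC.mp h1 (imc_ded h2)

lemma imc_and_intro {Γ : Set Formula} {a b : Formula} (h1 : IMC Γ a) (h2 : IMC Γ b) :
    IMC Γ (a.and b) := GHC.mp h2 (GHC.mp h1 (imc5 Γ a b))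

lemma imc_and_left {Γ : Set Formula} {a b : Formula} (h : IMC Γ (a.and b)) : IMC Γ a :=
  GHC.mp h (imc3 Γ a b)

lemma imc_and_right {Γ : Set Formula} {a b : Formula} (h : IMC Γ (a.and b)) : IMC Γ b :=
  GHC.mp h (imc4 Γ a b)

lemma imc_exfalso {Γ : Set Formula} {a : Formula} (h : IMC Γ .bot) : IMC Γ a :=
  GHC.mp h (imc9 Γ a)

lemma imc_pair {a b c : Formula} (h : IMC (insert a (insert b (∅ : Set Formula))) c) :
    IMC (∅ : Set Formula) ((a.and b).imp c) := by
  have h1 : IMC (∅ : Set Formula) (b.imp (a.imp c)) := imc_ded (imc_ded h)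
  have hab : IMC (insert (a.and b) (∅ : Set Formula)) (a.and b) := GHC.el (Set.mem_insert _ _)
  have h2 : IMC (insert (a.and b) (∅ : Set Formula)) c :=
    GHC.mp (imc_and_left hab)
      (GHC.mp (imc_and_right hab) (imc_mono h1 (Set.empty_subset _)))
  exact imc_ded h2

end Calculus
section Lindenbaum

/-- A consistent prime theory. -/
structure PT where
  s : Set Formula
  closed : ∀ {φ : Formula}, IMC s φ → φ ∈ s
  prime : ∀ {φ ψ : Formula}, φ.or ψ ∈ s → φ ∈ s ∨ ψ ∈ s
  cons : Formula.bot ∉ s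

lemma finite_subset_chain {c : Set (Set Formula)} (hc : IsChain (· ⊆ ·) c)
    (hne : c.Nonempty) {t : Set Formula} (ht : t.Finite) :
    t ⊆ ⋃₀ c → ∃ u ∈ c, t ⊆ u := by
  refine Set.Finite.induction_on
    (motive := fun t _ => t ⊆ ⋃₀ c → ∃ u ∈ c, t ⊆ u) t ht
    (fun _ => ⟨hne.choose, hne.choose_spec, Set.empty_subset _⟩) ?_
  intro x t hx htf ih hsub
  obtain ⟨u, hu, htu⟩ := ih (fun y hy => hsub (Set.mem_insert_of_mem _ hy))
  obtain ⟨v, hv, hxv⟩ := hsub (Set.mem_insert _ _)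
  rcases eq_or_ne u v with rfl | huv
  · exact ⟨u, hu, Set.insert_subset hxv htu⟩
  rcases hc hu hv huv with h | h
  · exact ⟨v, hv, Set.insert_subset hxv (htu.trans h)⟩
  · exact ⟨u, hu, Set.insert_subset (h hxv) htu⟩

lemma lindenbaum {Γ : Set Formula} {ψ : Formula} (h : ¬ IMC Γ ψ) :
    ∃ Δ : PT, Γ ⊆ Δ.s ∧ ψ ∉ Δ.s := by
  classical
  set S : Set (Set Formula) := {Δ | Γ ⊆ Δ ∧ ¬ IMC Δ ψ} with hS
  have hchain : ∀ c ⊆ S, IsChain (· ⊆ ·) c → c.Nonempty →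
      ∃ ub ∈ S, ∀ s ∈ c, s ⊆ ub := by
    intro c hcS hchain hcne
    refine ⟨⋃₀ c, ⟨?_, ?_⟩, fun s hs => Set.subset_sUnion_of_mem hs⟩
    · obtain ⟨u, hu⟩ := hcne
      exact (hcS hu).1.trans (Set.subset_sUnion_of_mem hu)
    · intro hd
      obtain ⟨Γ₀, hsub, hfin, hd0⟩ := imc_finite hd
      obtain ⟨u, hu, htu⟩ := finite_subset_chain hchain hcne hfin hsub
      exact (hcS hu).2 (imc_mono hd0 htu)
  obtain ⟨Δ, hsub, hmax⟩ := zorn_subset_nonempty S hchain Γ ⟨subset_rfl, h⟩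
  have hΔS : Δ ∈ S := hmax.1
  have hnd : ¬ IMC Δ ψ := hΔS.2
  have hkey : ∀ φ : Formula, φ ∉ Δ → IMC (insert φ Δ) ψ := by
    intro φ hφ
    by_contra hni
    have hmem : insert φ Δ ∈ S := ⟨hΔS.1.trans (Set.subset_insert _ _), hni⟩
    exact hφ (hmax.2 hmem (Set.subset_insert _ _) (Set.mem_insert _ _))
  have hclosed : ∀ {φ : Formula}, IMC Δ φ → φ ∈ Δ := by
    intro φ hd
    by_contra hφ
    exact hnd (imc_cut hd (hkey φ hφ))
  have hprime : ∀ {φ χ : Formula}, φ.or χ ∈ Δ → φ ∈ Δ ∨ χ ∈ Δ := by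
    intro φ χ hor
    by_contra hn
    push_neg at hn
    have d1 : IMC Δ (φ.imp ψ) := imc_ded (hkey φ hn.1)
    have d2 : IMC Δ (χ.imp ψ) := imc_ded (hkey χ hn.2)
    exact hnd (GHC.mp (GHC.el hor) (GHC.mp d2 (GHC.mp d1 (imc8 Δ φ χ ψ))))
  have hcons : Formula.bot ∉ Δ := fun hb => hnd (imc_exfalso (GHC.el hb))
  exact ⟨⟨Δ, hclosed, hprime, hcons⟩, hΔS.1, fun hm => hnd (GHC.el hm)⟩

lemma PT.not_imc {Δ : PT} {φ : Formula} (h : φ ∉ Δ.s) : ¬ IMC Δ.s φ :=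
  fun hd => h (Δ.closed hd)

lemma PT.box_top_mem {Δ : PT} {χ : Formula} (h : Formula.box χ ∈ Δ.s) :
    Formula.box Formula.top ∈ Δ.s := by
  have h1 : IMC (∅ : Set Formula) (χ.imp Formula.top) :=
    GHC.mp (imc_top ∅) (imc1 ∅ Formula.top χ)
  exact Δ.closed (GHC.mp (GHC.el h) (GHC.monBox h1))

end Lindenbaum
section Canonical

/-- Index component of canonical worlds: an avoidance function and a flag. -/
abbrev Kc : Type := (Formula → Formula) × Bool

/-- Worlds of the canonical model. -/
abbrev CWorld : Type := PT × Kc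

/-- `ρ` is unavoidable over `χ` relative to `Δ`. -/
def CBad (χ ρ : Formula) (Δ : PT) : Prop :=
  IMC ∅ (χ.imp ρ) ∨ ∃ σf : Formula, Formula.dia σf ∈ Δ.s ∧ IMC ∅ ((χ.and σf).imp ρ)

/-- Canonical neighbourhood determined by box-witness `χ` and avoidance target `ρ`. -/
def CAset (χ ρ : Formula) (Δ : PT) : Set CWorld :=
  {v | χ ∈ v.1.s ∧ (CBad χ ρ Δ ∨ ρ ∉ v.1.s)}

/-- The canonical full constructive neighbourhood model. -/
def canon : CNStruct CWorld where
  le w v := w.1.s ⊆ v.1.s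
  nf w := {A | (∃ χ : Formula, Formula.box χ ∈ w.1.s ∧ A = CAset χ (w.2.1 χ) w.1)
      ∨ (A = ∅ ∧ w.2.2 = true ∧ (∀ σf : Formula, Formula.dia σf ∉ w.1.s)
          ∧ Formula.box Formula.top ∈ w.1.s)}
  V i := {w | Formula.prop i ∈ w.1.s}

lemma canon_isModel : canon.IsModel :=
  ⟨{ refl := fun w => subset_rfl, trans := fun a b c h1 h2 => h1.trans h2 },
    fun i w v h hw => h hw⟩

lemma canon_full : canon.Full := by
  intro w w' hle hne
  have : ∃ A, A ∈ canon.nf w := Set.nonempty_iff_ne_empty.2 hne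
  obtain ⟨A, hA⟩ := this
  have htop : Formula.box Formula.top ∈ w.1.s := by
    rcases hA with ⟨χ, hχ, _⟩ | ⟨_, _, _, htop⟩
    · exact PT.box_top_mem hχ
    · exact htop
  have htop' : Formula.box Formula.top ∈ w'.1.s := hle htop
  apply Set.nonempty_iff_ne_empty.1
  exact ⟨CAset Formula.top (w'.2.1 Formula.top) w'.1, Or.inl ⟨Formula.top, htop', rfl⟩⟩

/-- The truth lemma for the canonical model. -/
lemma canon_truth : ∀ (φ : Formula) (w : CWorld), canon.sat φ w ↔ φ ∈ w.1.s := by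
  intro φ
  induction φ with
  | prop i => exact fun w => Iff.rfl
  | bot => exact fun w => ⟨False.elim, fun h => (w.1.cons h).elim⟩
  | and φ ψ ihφ ihψ =>
      intro w
      show canon.sat φ w ∧ canon.sat ψ w ↔ _
      rw [ihφ, ihψ]
      constructor
      · exact fun ⟨h1, h2⟩ => w.1.closed (imc_and_intro (GHC.el h1) (GHC.el h2))
      · exact fun h => ⟨w.1.closed (imc_and_left (GHC.el h)),
          w.1.closed (imc_and_right (GHC.el h))⟩
  | or φ ψ ihφ ihψ =>
      intro w
      show canon.sat φ w ∨ canon.sat ψ w ↔ _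
      rw [ihφ, ihψ]
      constructor
      · rintro (h | h)
        · exact w.1.closed (GHC.mp (GHC.el h) (imc6 _ φ ψ))
        · exact w.1.closed (GHC.mp (GHC.el h) (imc7 _ φ ψ))
      · exact fun h => w.1.prime h
  | imp φ ψ ihφ ihψ =>
      intro w
      show (∀ v, canon.le w v → canon.sat φ v → canon.sat ψ v) ↔ _
      constructor
      · intro h
        by_contra hn
        have hni : ¬ IMC (insert φ w.1.s) ψ := fun hd => hn (w.1.closed (imc_ded hd))
        obtain ⟨Θ, hsub, hψ⟩ := lindenbaum hni
        have hle : canon.le w (Θ, w.2) := (Set.subset_insert _ _).trans hsub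
        have := h (Θ, w.2) hle ((ihφ _).2 (hsub (Set.mem_insert _ _)))
        exact hψ ((ihψ _).1 this)
      · intro h v hle hφ
        have hφv : φ ∈ v.1.s := (ihφ v).1 hφ
        exact (ihψ v).2 (v.1.closed (GHC.mp (GHC.el hφv) (GHC.el (hle h))))
  | box φ ih =>
      intro w
      show (∀ w', canon.le w w' → ∃ A ∈ canon.nf w', ∀ v ∈ A, canon.sat φ v) ↔ _
      constructor
      · intro h
        by_contra hn
        obtain ⟨A, hA, hall⟩ := h (w.1, (fun _ => φ, false)) subset_rfl
        rcases hA with ⟨χ, hχ, rfl⟩ | ⟨_, hc, _, _⟩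
        · have hni : ¬ IMC (insert χ (∅ : Set Formula)) φ := by
            intro hd
            exact hn (w.1.closed (GHC.mp (GHC.el hχ) (GHC.monBox (imc_ded hd))))
          obtain ⟨Θ, hsub, hφ⟩ := lindenbaum hni
          have hv : (⟨Θ, (fun _ => φ, false)⟩ : CWorld) ∈ CAset χ φ w.1 :=
            ⟨hsub (Set.mem_insert _ _), Or.inr hφ⟩
          exact hφ ((ih _).1 (hall _ hv))
        · simp at hc
      · intro h w' hle
        refine ⟨CAset φ (w'.2.1 φ) w'.1, Or.inl ⟨φ, hle h, rfl⟩, ?_⟩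
        exact fun v hv => (ih v).2 hv.1
  | dia φ ih =>
      intro w
      show (∀ w', canon.le w w' → ∀ A ∈ canon.nf w', ∃ v ∈ A, canon.sat φ v) ↔ _
      constructor
      · intro h
        by_contra hn
        -- use the I◇ axiom to find a prime extension with □⊤ and without ◇φ
        have h1 : ¬ IMC w.1.s ((Formula.box Formula.top).imp (Formula.dia φ)) := by
          intro hd
          exact hn (w.1.closed (GHC.mp hd (imcIDia _ φ)))
        have h2 : ¬ IMC (insert (Formula.box Formula.top) w.1.s) (Formula.dia φ) :=
          fun hd => h1 (imc_ded hd)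
        obtain ⟨Θ, hsub, hdφ⟩ := lindenbaum h2
        have hle : w.1.s ⊆ Θ.s := (Set.subset_insert _ _).trans hsub
        have htop : Formula.box Formula.top ∈ Θ.s := hsub (Set.mem_insert _ _)
        by_cases hex : ∃ σ0 : Formula, Formula.dia σ0 ∈ Θ.s
        · -- some diamond formula present: use the ⊤-neighbourhood avoiding φ
          obtain ⟨σ0, hσ0⟩ := hex
          have hA : CAset Formula.top φ Θ ∈ canon.nf (Θ, (fun _ => φ, false)) :=
            Or.inl ⟨Formula.top, htop, rfl⟩
          obtain ⟨v, hv, hsat⟩ := h (Θ, (fun _ => φ, false)) hle _ hA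
          have hφv : φ ∈ v.1.s := (ih v).1 hsat
          rcases hv.2 with hbad | hnot
          · -- Bad ⊤ φ Θ leads to ◇φ ∈ Θ, contradiction
            rcases hbad with hb | ⟨σ', hσ', himp⟩
            · have hφd : IMC (∅ : Set Formula) φ := GHC.mp (imc_top ∅) hb
              have hσφ : IMC (∅ : Set Formula) (σ0.imp φ) :=
                GHC.mp hφd (imc1 ∅ φ σ0)
              exact hdφ (Θ.closed (GHC.mp (GHC.el hσ0) (GHC.monDia hσφ)))
            · have hσ'φ : IMC (∅ : Set Formula) (σ'.imp φ) := by
                have hts : IMC (insert σ' (∅ : Set Formula)) (Formula.top.and σ') :=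
                  imc_and_intro (imc_top _) (GHC.el (Set.mem_insert _ _))
                exact imc_ded (GHC.mp hts (imc_mono himp (Set.empty_subset _)))
              exact hdφ (Θ.closed (GHC.mp (GHC.el hσ') (GHC.monDia hσ'φ)))
          · exact hnot hφv
        · -- no diamond formulas: the empty neighbourhood is available
          have hA : (∅ : Set CWorld) ∈ canon.nf (Θ, (fun _ => φ, true)) :=
            Or.inr ⟨rfl, rfl, fun σf hσf => hex ⟨σf, hσf⟩, htop⟩
          obtain ⟨v, hv, _⟩ := h (Θ, (fun _ => φ, true)) hle _ hA
          exact hv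
      · intro h w' hle A hA
        have hdφ : Formula.dia φ ∈ w'.1.s := hle h
        rcases hA with ⟨χ, hχ, rfl⟩ | ⟨_, _, hnodia, _⟩
        · -- consistency of {χ, φ}
          have hcons : ¬ IMC (insert χ (insert φ (∅ : Set Formula))) Formula.bot := by
            intro hbot
            have hd1 : IMC (∅ : Set Formula) (φ.imp χ.neg) := imc_ded (imc_ded hbot)
            have hd2 : IMC w'.1.s (Formula.dia χ.neg) :=
              GHC.mp (GHC.el hdφ) (GHC.monDia hd1)
            have hd3 : IMC w'.1.s Formula.bot :=
              GHC.mp (imc_and_intro (GHC.el hχ) hd2) (imcNegA _ χ)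
            exact w'.1.cons (w'.1.closed hd3)
          by_cases hbad : CBad χ (w'.2.1 χ) w'.1
          · obtain ⟨Θ', hsub', _⟩ := lindenbaum hcons
            refine ⟨(Θ', w'.2), ⟨hsub' (Set.mem_insert _ _), Or.inl hbad⟩, ?_⟩
            exact (ih _).2 (hsub' (Set.mem_insert_of_mem _ (Set.mem_insert _ _)))
          · have hnr : ¬ IMC (insert χ (insert φ (∅ : Set Formula))) (w'.2.1 χ) :=
              fun hr => hbad (Or.inr ⟨φ, hdφ, imc_pair hr⟩)
            obtain ⟨Θ', hsub', hρ⟩ := lindenbaum hnr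
            refine ⟨(Θ', w'.2), ⟨hsub' (Set.mem_insert _ _), Or.inr hρ⟩, ?_⟩
            exact (ih _).2 (hsub' (Set.mem_insert_of_mem _ (Set.mem_insert _ _)))
        · exact absurd hdφ (hnodia φ)

end Canonical
section Soundness

variable {W : Type} {M : CNStruct W}

lemma sat_mono (hM : M.IsModel) :
    ∀ (φ : Formula) {w v : W}, M.le w v → M.sat φ w → M.sat φ v := by
  have htr : ∀ {a b c : W}, M.le a b → M.le b c → M.le a c :=
    fun h1 h2 => hM.1.toIsTrans.trans _ _ _ h1 h2
  intro φ
  induction φ with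
  | prop i => exact fun h hw => hM.2 i h hw
  | bot => exact fun _ h => h.elim
  | and φ ψ ihφ ihψ => exact fun h hw => ⟨ihφ h hw.1, ihψ h hw.2⟩
  | or φ ψ ihφ ihψ =>
      exact fun h hw => hw.elim (fun h1 => Or.inl (ihφ h h1)) (fun h2 => Or.inr (ihψ h h2))
  | imp φ ψ ihφ ihψ =>
      intro w v h hw
      exact fun u hu hφ => hw u (htr h hu) hφ
  | box φ ih =>
      intro w v h hw
      exact fun w' hw' => hw w' (htr h hw')
  | dia φ ih =>
      intro w v h hw
      exact fun w' hw' => hw w' (htr h hw')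

lemma sat_top (M : CNStruct W) (w : W) : M.sat Formula.top w :=
  fun _ _ hb => hb

lemma valid_scrax (hM : M.IsModel) (hF : M.Full) {ψ : Formula} (h : ψ ∈ ScrAx IMAx) :
    ∀ w : W, M.sat ψ w := by
  have hrf : ∀ a : W, M.le a a := fun a => hM.1.toRefl.refl a
  have htr : ∀ {a b c : W}, M.le a b → M.le b c → M.le a c :=
    fun h1 h2 => hM.1.toIsTrans.trans _ _ _ h1 h2
  -- validity of the schema shapes
  have v1 : ∀ (a b : Formula) (w : W), M.sat (a.imp (b.imp a)) w := by
    intro a b w v _ ha u hu hb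
    exact sat_mono hM a hu ha
  have v2 : ∀ (a b c : Formula) (w : W),
      M.sat ((a.imp (b.imp c)).imp ((a.imp b).imp (a.imp c))) w := by
    intro a b c w v _ h1 u hu h2 t ht ha
    exact h1 t (htr hu ht) ha t (hrf t) (h2 t ht ha)
  have v3 : ∀ (a b : Formula) (w : W), M.sat ((a.and b).imp a) w := by
    intro a b w v _ hab; exact hab.1
  have v4 : ∀ (a b : Formula) (w : W), M.sat ((a.and b).imp b) w := by
    intro a b w v _ hab; exact hab.2
  have v5 : ∀ (a b : Formula) (w : W), M.sat (a.imp (b.imp (a.and b))) w := by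
    intro a b w v _ ha u hu hb
    exact ⟨sat_mono hM a hu ha, hb⟩
  have v6 : ∀ (a b : Formula) (w : W), M.sat (a.imp (a.or b)) w := by
    intro a b w v _ ha; exact Or.inl ha
  have v7 : ∀ (a b : Formula) (w : W), M.sat (b.imp (a.or b)) w := by
    intro a b w v _ hb; exact Or.inr hb
  have v8 : ∀ (a b c : Formula) (w : W),
      M.sat ((a.imp c).imp ((b.imp c).imp ((a.or b).imp c))) w := by
    intro a b c w v _ h1 u hu h2 t ht hab
    rcases hab with ha | hb
    · exact h1 t (htr hu ht) ha
    · exact h2 t ht hb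
  have v9 : ∀ (a : Formula) (w : W), M.sat (Formula.bot.imp a) w := by
    intro a w v _ hb; exact hb.elim
  have vNegA : ∀ (a : Formula) (w : W),
      M.sat (((Formula.box a).and (Formula.dia a.neg)).imp Formula.bot) w := by
    intro a w v _ hand
    obtain ⟨A, hA, hall⟩ := hand.1 v (hrf v)
    obtain ⟨u, hu, hneg⟩ := hand.2 v (hrf v) A hA
    exact hneg u (hrf u) (hall u hu)
  have vIDia : ∀ (a : Formula) (w : W),
      M.sat (((Formula.box Formula.top).imp (Formula.dia a)).imp (Formula.dia a)) w := by
    intro a w v _ hyp v' hv' A hA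
    have hne : M.nf v' ≠ ∅ := by
      intro he
      rw [he] at hA
      exact hA
    have hboxtop : M.sat (Formula.box Formula.top) v' := by
      intro u hu
      obtain ⟨B, hB⟩ := Set.nonempty_iff_ne_empty.2 (hF hu hne)
      exact ⟨B, hB, fun t _ => sat_top M t⟩
    exact hyp v' hv' hboxtop v' (hrf v') A hA
  rcases h with ⟨base, hb, σ, rfl⟩ | ⟨base, hb, σ, rfl⟩
  · -- IMAx instances
    simp only [IMAx, Set.mem_insert_iff, Set.mem_singleton_iff] at hb
    rcases hb with rfl | rfl
    · intro w; simpa [Formula.subst, Formula.neg, pp0] using vNegA (σ 0) w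
    · intro w; simpa [Formula.subst, Formula.top, pp0] using vIDia (σ 0) w
  · -- IpcAx instances
    simp only [IpcAx, Set.mem_insert_iff, Set.mem_singleton_iff] at hb
    rcases hb with rfl | rfl | rfl | rfl | rfl | rfl | rfl | rfl | rfl
    · intro w; simpa [Formula.subst, pp0, pp1] using v1 (σ 0) (σ 1) w
    · intro w; simpa [Formula.subst, pp0, pp1, pp2] using v2 (σ 0) (σ 1) (σ 2) w
    · intro w; simpa [Formula.subst, pp0, pp1] using v3 (σ 0) (σ 1) w
    · intro w; simpa [Formula.subst, pp0, pp1] using v4 (σ 0) (σ 1) w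
    · intro w; simpa [Formula.subst, pp0, pp1] using v5 (σ 0) (σ 1) w
    · intro w; simpa [Formula.subst, pp0, pp1] using v6 (σ 0) (σ 1) w
    · intro w; simpa [Formula.subst, pp0, pp1] using v7 (σ 0) (σ 1) w
    · intro w; simpa [Formula.subst, pp0, pp1, pp2] using v8 (σ 0) (σ 1) (σ 2) w
    · intro w; simpa [Formula.subst, pp0] using v9 (σ 0) w

lemma imc_sound {Γ : Set Formula} {φ : Formula} (h : IMC Γ φ) :
    ∀ (W : Type) (M : CNStruct W), M.IsModel → M.Full →
      ∀ w : W, (∀ ψ ∈ Γ, M.sat ψ w) → M.sat φ w := by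
  induction h with
  | el h => exact fun W M hM hF w hw => hw _ h
  | ax h => exact fun W M hM hF w hw => valid_scrax hM hF h w
  | mp _ _ ih1 ih2 =>
      intro W M hM hF w hw
      exact ih2 W M hM hF w hw w (hM.1.toRefl.refl w) (ih1 W M hM hF w hw)
  | @monBox Γ a b hp ih =>
      intro W M hM hF w hw
      intro v hv hbox w' hw'
      obtain ⟨A, hA, hall⟩ := hbox w' hw'
      refine ⟨A, hA, fun u hu => ?_⟩
      exact ih W M hM hF u (by simp) u (hM.1.toRefl.refl u) (hall u hu)
  | @monDia Γ a b hp ih =>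
      intro W M hM hF w hw
      intro v hv hdia w' hw' A hA
      obtain ⟨u, hu, hsat⟩ := hdia w' hw' A hA
      exact ⟨u, hu, ih W M hM hF u (by simp) u (hM.1.toRefl.refl u) hsat⟩

end Soundness
/-- Soundness and strong completeness of IMCalc w.r.t. full
constructive neighbourhood models. -/
theorem imcalc_full_cn (Γ : Set Formula) (φ : Formula) :
    IMC Γ φ ↔
      ∀ (W : Type) (M : CNStruct W), M.IsModel → M.Full →
        ∀ w : W, (∀ ψ ∈ Γ, M.sat ψ w) → M.sat φ w := by
  constructor
  · exact fun h => imc_sound h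
  · intro h
    by_contra hn
    obtain ⟨Δ, hsub, hφ⟩ := lindenbaum hn
    have hsat := h CWorld canon canon_isModel canon_full (Δ, (fun _ => Formula.bot, false))
      (fun ψ hψ => (canon_truth ψ _).2 (hsub hψ))
    exact hφ ((canon_truth φ _).1 hsat)

end IMPaper
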